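/- For any tree T of order n with diameter d, Λ(T) ≤ (n−d−1)·d + Σ_{i=0}^{d} |d − 2i|, with equality if and only if every vertex not on some fixed longest path is a peripheral vertex (i.e., T is a dumbbell D(n,a,b) with a+b = n−d+1). -/

import Mathlib

open Finset

variable {V : Type*}

/-- Eccentricity: the maximum distance from `v` to any vertex. -/
noncomputable def ecc (G : SimpleGraph V) [Fintype V] (v : V) : ℕ :=
  Finset.univ.sup fun u => G.dist v u

/-- Diameter: the maximum eccentricity. -/
noncomputable def gdiam (G : SimpleGraph V) [Fintype V] : ℕ :=
  Finset.univ.sup fun v => ecc G v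

/-- A vertex is peripheral if its eccentricity equals the diameter. -/
noncomputable def peripheral (G : SimpleGraph V) [Fintype V] (v : V) : Prop :=
  ecc G v = gdiam G

/-- Normality: the minimum distance from `v` to a peripheral vertex. -/
noncomputable def gnorm (G : SimpleGraph V) [Fintype V] (v : V) : ℕ :=
  sInf {n | ∃ u, peripheral G u ∧ G.dist v u = n}

/-- The sum of normalities. -/
noncomputable def NormSum (G : SimpleGraph V) [Fintype V] : ℕ :=
  ∑ v, gnorm G v

/-- λ(v) = ecc(v) − norm(v). -/
noncomputable def lam (G : SimpleGraph V) [Fintype V] (v : V) : ℕ :=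
  ecc G v - gnorm G v

/-- Λ(T) = Σ_v λ(v). -/
noncomputable def LamSum (G : SimpleGraph V) [Fintype V] : ℕ :=
  ∑ v, lam G v

section TreeAux
variable {G : SimpleGraph V}

lemma plen_eq_dist (hT : G.IsTree) {x y : V} {p : G.Walk x y} (hp : p.IsPath) :
    p.length = G.dist x y := by
  classical
  obtain ⟨q, hq, hql⟩ := hT.isConnected.exists_path_of_dist x y
  rw [← hql, (hT.existsUnique_path x y).unique hp hq]

lemma dist_add_of_mem (hT : G.IsTree) {x y v : V} {p : G.Walk x y} (hp : p.IsPath)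
    (hv : v ∈ p.support) : G.dist x v + G.dist v y = p.length := by
  classical
  have h1 := hp.takeUntil hv
  have h2 := hp.dropUntil hv
  have h3 := congrArg SimpleGraph.Walk.length (p.take_spec hv)
  rw [SimpleGraph.Walk.length_append] at h3
  rw [← plen_eq_dist hT h1, ← plen_eq_dist hT h2, h3]

lemma geo_split (hT : G.IsTree) {x y v : V} {p : G.Walk x y} (hp : p.IsPath)
    (hv : v ∈ p.support) (u : V) :
    G.dist x u = G.dist x v + G.dist v u ∨ G.dist y u = G.dist y v + G.dist v u := by
  classical
  obtain ⟨q, hq, -⟩ := hT.isConnected.exists_path_of_dist x u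
  obtain ⟨r, hr, -⟩ := hT.isConnected.exists_path_of_dist u y
  have hbp : (q.append r).bypass = p :=
    (hT.existsUnique_path x y).unique (q.append r).bypass_isPath hp
  have hvsup : v ∈ (q.append r).support := by
    apply SimpleGraph.Walk.support_bypass_subset
    rw [hbp]; exact hv
  rw [SimpleGraph.Walk.mem_support_append_iff] at hvsup
  rcases hvsup with h | h
  · left
    have h4 := dist_add_of_mem hT hq h
    rw [plen_eq_dist hT hq] at h4
    omega
  · right
    have h4 := dist_add_of_mem hT hr h
    rw [plen_eq_dist hT hr] at h4
    rw [SimpleGraph.dist_comm (u := y) (v := u), SimpleGraph.dist_comm (u := y) (v := v),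
      SimpleGraph.dist_comm (u := v) (v := u)]
    omega

end TreeAux

section Key
variable [Fintype V] [DecidableEq V] {G : SimpleGraph V}

lemma dist_le_ecc (v u : V) : G.dist v u ≤ ecc G v := Finset.le_sup (Finset.mem_univ u)

lemma ecc_le_gdiam (v : V) : ecc G v ≤ gdiam G := Finset.le_sup (Finset.mem_univ v)

lemma exists_peripheral (hT : G.IsTree) : ∃ v, peripheral G v := by
  have : Nonempty V := hT.isConnected.nonempty
  obtain ⟨v, -, hv⟩ := Finset.exists_mem_eq_sup Finset.univ Finset.univ_nonempty
    (fun v => ecc G v)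
  exact ⟨v, hv.symm⟩

lemma gnorm_le_dist {u : V} (hu : peripheral G u) (v : V) : gnorm G v ≤ G.dist v u :=
  Nat.sInf_le ⟨u, hu, rfl⟩

lemma lam_le_gdiam (v : V) : lam G v ≤ gdiam G :=
  le_trans (Nat.sub_le _ _) (ecc_le_gdiam v)

lemma lam_eq_gdiam_iff (hT : G.IsTree) (v : V) : lam G v = gdiam G ↔ peripheral G v := by
  constructor
  · intro h
    have h1 : lam G v ≤ ecc G v := Nat.sub_le _ _
    exact le_antisymm (ecc_le_gdiam v) (h ▸ h1)
  · intro h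
    have h0 : gnorm G v = 0 :=
      Nat.le_zero.mp (Nat.sInf_le ⟨v, h, SimpleGraph.dist_self⟩)
    unfold lam
    rw [h0, Nat.sub_zero]
    exact h

lemma supp_card {x y : V} {p : G.Walk x y} (hp : p.IsPath)
    (hlen : p.length = gdiam G) :
    p.support.toFinset.card = gdiam G + 1 := by
  classical
  rw [List.toFinset_card_of_nodup hp.support_nodup, SimpleGraph.Walk.length_support, hlen]

lemma key (hT : G.IsTree) {x y : V} {p : G.Walk x y} (hp : p.IsPath)
    (hlen : p.length = gdiam G) :
    LamSum G = (∑ v ∈ Finset.univ \ p.support.toFinset, lam G v) +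
      ∑ i ∈ Finset.range (gdiam G + 1), ((gdiam G : ℤ) - 2 * i).natAbs := by
  classical
  have hxy : G.dist x y = gdiam G := by rw [← plen_eq_dist hT hp, hlen]
  have hsupp : ∀ v ∈ p.support, G.dist x v + G.dist v y = gdiam G := fun v hv => by
    rw [dist_add_of_mem hT hp hv, hlen]
  have hxperi : peripheral G x := le_antisymm (ecc_le_gdiam x) (hxy ▸ dist_le_ecc x y)
  have hyperi : peripheral G y := by
    refine le_antisymm (ecc_le_gdiam y) ?_
    rw [← hxy, SimpleGraph.dist_comm (u := x) (v := y)]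
    exact dist_le_ecc y x
  have hne : Nonempty V := hT.isConnected.nonempty
  have hecc : ∀ v ∈ p.support, ecc G v = max (G.dist x v) (G.dist v y) := by
    intro v hv
    have h2 := hsupp v hv
    apply le_antisymm
    · apply Finset.sup_le
      intro u _
      rcases geo_split hT hp hv u with h | h
      · have h1 : G.dist x u ≤ gdiam G := le_trans (dist_le_ecc x u) (ecc_le_gdiam x)
        calc G.dist v u ≤ G.dist v y := by omega
          _ ≤ max (G.dist x v) (G.dist v y) := le_max_right _ _
      · have h1 : G.dist y u ≤ gdiam G := le_trans (dist_le_ecc y u) (ecc_le_gdiam y)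
        have e1 : G.dist y v = G.dist v y := SimpleGraph.dist_comm
        calc G.dist v u ≤ G.dist x v := by omega
          _ ≤ max (G.dist x v) (G.dist v y) := le_max_left _ _
    · apply max_le
      · rw [SimpleGraph.dist_comm (u := x) (v := v)]
        exact dist_le_ecc v x
      · exact dist_le_ecc v y
  have hnorm : ∀ v ∈ p.support, gnorm G v = min (G.dist x v) (G.dist v y) := by
    intro v hv
    have h2 := hsupp v hv
    apply le_antisymm
    · apply le_min
      · have h3 := gnorm_le_dist hxperi v
        rwa [SimpleGraph.dist_comm (u := v) (v := x)] at h3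
      · exact gnorm_le_dist hyperi v
    · refine le_csInf ⟨G.dist v x, ⟨x, hxperi, rfl⟩⟩ ?_
      rintro m ⟨u, hu, rfl⟩
      obtain ⟨w, -, hw⟩ := Finset.exists_mem_eq_sup Finset.univ Finset.univ_nonempty
        (fun w => G.dist u w)
      have hdw : G.dist u w = gdiam G := by rw [← hw]; exact hu
      have htri : G.dist u w ≤ G.dist u v + G.dist v w := hT.isConnected.dist_triangle
      have hvw : G.dist v w ≤ max (G.dist x v) (G.dist v y) := by
        rw [← hecc v hv]; exact dist_le_ecc v w
      have hcm : G.dist u v = G.dist v u := SimpleGraph.dist_comm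
      rcases le_total (G.dist x v) (G.dist v y) with hle | hle
      · rw [min_eq_left hle]
        rw [max_eq_right hle] at hvw
        omega
      · rw [min_eq_right hle]
        rw [max_eq_left hle] at hvw
        omega
  have hlam : ∀ v ∈ p.support, lam G v = ((gdiam G : ℤ) - 2 * (G.dist x v)).natAbs := by
    intro v hv
    have h2 := hsupp v hv
    unfold lam
    rw [hecc v hv, hnorm v hv]
    rcases le_total (G.dist x v) (G.dist v y) with hle | hle
    · rw [max_eq_right hle, min_eq_left hle]; omega
    · rw [max_eq_left hle, min_eq_right hle]; omega
  have hinj : ∀ v ∈ p.support.toFinset, ∀ w ∈ p.support.toFinset,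
      G.dist x v = G.dist x w → v = w := by
    intro v hv w hw hvw
    rw [List.mem_toFinset] at hv hw
    have h1 := hsupp v hv
    have h2 := hsupp w hw
    have hdeq : G.dist v w = 0 := by
      rcases geo_split hT hp hv w with h | h
      · omega
      · have e1 : G.dist y v = G.dist v y := SimpleGraph.dist_comm
        have e2 : G.dist y w = G.dist w y := SimpleGraph.dist_comm
        omega
    exact (hT.isConnected.dist_eq_zero_iff).mp hdeq
  have hcard : p.support.toFinset.card = gdiam G + 1 := supp_card hp hlen
  have himg : p.support.toFinset.image (G.dist x) = Finset.range (gdiam G + 1) := by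
    apply Finset.eq_of_subset_of_card_le
    · intro i hi
      rw [Finset.mem_image] at hi
      obtain ⟨v, hv, rfl⟩ := hi
      rw [List.mem_toFinset] at hv
      have := hsupp v hv
      rw [Finset.mem_range]; omega
    · rw [Finset.card_range, Finset.card_image_of_injOn
        (fun a ha b hb h => hinj a (by simpa using ha) b (by simpa using hb) h), hcard]
  have hsum_supp : ∑ v ∈ p.support.toFinset, lam G v
      = ∑ i ∈ Finset.range (gdiam G + 1), ((gdiam G : ℤ) - 2 * i).natAbs := by
    rw [← himg, Finset.sum_image hinj]
    exact Finset.sum_congr rfl fun v hv => hlam v (List.mem_toFinset.mp hv)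
  have hsplit := Finset.sum_sdiff (f := lam G) (p.support.toFinset.subset_univ)
  unfold LamSum
  rw [← hsplit, hsum_supp]

end Key

theorem stmt_14 [Fintype V] (G : SimpleGraph V) (hT : G.IsTree) :
    LamSum G ≤ (Fintype.card V - gdiam G - 1) * gdiam G +
      ∑ i ∈ Finset.range (gdiam G + 1), ((gdiam G : ℤ) - 2 * i).natAbs ∧
    (LamSum G = (Fintype.card V - gdiam G - 1) * gdiam G +
        ∑ i ∈ Finset.range (gdiam G + 1), ((gdiam G : ℤ) - 2 * i).natAbs ↔
      ∃ (x y : V) (p : G.Walk x y), p.IsPath ∧ p.length = gdiam G ∧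
        ∀ v : V, v ∉ p.support → peripheral G v) := by
  classical
  have hne : Nonempty V := hT.isConnected.nonempty
  obtain ⟨v0, -, hv0⟩ := Finset.exists_mem_eq_sup Finset.univ Finset.univ_nonempty
    (fun v => ecc G v)
  obtain ⟨u0, -, hu0⟩ := Finset.exists_mem_eq_sup Finset.univ Finset.univ_nonempty
    (fun u => G.dist v0 u)
  obtain ⟨p0, hp0, hl0⟩ := hT.isConnected.exists_path_of_dist v0 u0
  have hlen0 : p0.length = gdiam G := by
    rw [hl0, ← hu0]
    exact hv0.symm
  have compl_card : ∀ {x y : V} {p : G.Walk x y}, p.IsPath → p.length = gdiam G →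
      (Finset.univ \ p.support.toFinset).card = Fintype.card V - gdiam G - 1 := by
    intro x y p hp hlen
    rw [Finset.card_sdiff, Finset.inter_univ, Finset.card_univ, supp_card hp hlen]
    omega
  have hkey0 := key hT hp0 hlen0
  have hcc0 := compl_card hp0 hlen0
  have hle0 : ∑ v ∈ Finset.univ \ p0.support.toFinset, lam G v ≤ (Fintype.card V - gdiam G - 1) * gdiam G := by
    calc ∑ v ∈ Finset.univ \ p0.support.toFinset, lam G v
        ≤ ∑ _v ∈ Finset.univ \ p0.support.toFinset, gdiam G :=
          Finset.sum_le_sum fun v _ => lam_le_gdiam v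
      _ = (Fintype.card V - gdiam G - 1) * gdiam G := by rw [Finset.sum_const, hcc0, smul_eq_mul]
  constructor
  · rw [hkey0]
    exact add_le_add_left hle0 _
  constructor
  · intro heq
    refine ⟨v0, u0, p0, hp0, hlen0, ?_⟩
    intro v hvn
    rw [hkey0] at heq
    have h1 : ∑ v ∈ Finset.univ \ p0.support.toFinset, lam G v = (Fintype.card V - gdiam G - 1) * gdiam G :=
      Nat.add_right_cancel heq
    have h2 : ∑ v ∈ Finset.univ \ p0.support.toFinset, lam G v
        = ∑ _v ∈ Finset.univ \ p0.support.toFinset, gdiam G := by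
      rw [h1, Finset.sum_const, hcc0, smul_eq_mul]
    have h3 := (Finset.sum_eq_sum_iff_of_le fun v _ => lam_le_gdiam (G := G) v).mp h2
    have hvmem : v ∈ Finset.univ \ p0.support.toFinset := by
      rw [Finset.mem_sdiff, List.mem_toFinset]
      exact ⟨Finset.mem_univ v, hvn⟩
    exact (lam_eq_gdiam_iff hT v).mp (h3 v hvmem)
  · rintro ⟨x, y, p, hp, hlen, hperi⟩
    rw [key hT hp hlen]
    have hall : ∀ w ∈ Finset.univ \ p.support.toFinset, lam G w = gdiam G := by
      intro w hw
      rw [Finset.mem_sdiff, List.mem_toFinset] at hw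
      exact (lam_eq_gdiam_iff hT w).mpr (hperi w hw.2)
    rw [Finset.sum_congr rfl hall, Finset.sum_const, compl_card hp hlen, smul_eq_mul]
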